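/- Let p be an odd prime, G = V ⋊ ⟨c⟩ the quotient of C₂ ≀ C_p by its center, and v₁c^{a₁},…,v_nc^{a_n} a generating set of G with v_i ∈ V. Then at least one a_i ≢ 0 (mod p), and the commutators w_i = [c, v_i c^{a_i}] lie in V; moreover if additionally c is among the generators then {c, w₂,…,w_n} generates G whenever {c, v₂c^{a₂},…,v_nc^{a_n}} does. -/

import Mathlib

/-- The base group of the wreath product `C₂ ≀ C_p`, written multiplicatively. -/
abbrev WreathBase (p : ℕ) := Multiplicative (ZMod p → ZMod 2)

/-- The shift automorphism of the base group, by `k`. -/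
def shiftAddAut (p : ℕ) (k : ZMod p) : AddAut (ZMod p → ZMod 2) where
  toFun f i := f (i + k)
  invFun f i := f (i - k)
  left_inv f := by funext i; simp
  right_inv f := by funext i; simp
  map_add' f g := rfl

/-- The action of `C_p` on the base group by cyclic shifts. -/
def wreathShift (p : ℕ) : Multiplicative (ZMod p) →* MulAut (WreathBase p) where
  toFun k := AddEquiv.toMultiplicative (shiftAddAut p k.toAdd)
  map_one' := by
    ext f
    simp [shiftAddAut, AddEquiv.toMultiplicative]
  map_mul' a b := by
    ext f
    simp only [shiftAddAut, AddEquiv.toMultiplicative]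
    simp [add_assoc]

/-- The wreath product `C₂ ≀ C_p`. -/
abbrev Wreath (p : ℕ) := WreathBase p ⋊[wreathShift p] Multiplicative (ZMod p)

/-- The quotient `G = W / Z(W)` of the wreath product by its center. -/
abbrev WreathQuot (p : ℕ) := Wreath p ⧸ Subgroup.center (Wreath p)

/-- The canonical generator `c`, the image in `G` of the generator of `C_p`. -/
def cElem (p : ℕ) : WreathQuot p :=
  QuotientGroup.mk' _ (SemidirectProduct.inr (Multiplicative.ofAdd (1 : ZMod p)))

/-- `V`, the image in `G` of the base group `C₂^p`. -/
def Vsub (p : ℕ) : Subgroup (WreathQuot p) :=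
  Subgroup.map (QuotientGroup.mk' _) (SemidirectProduct.inl (φ := wreathShift p)).range

open scoped commutatorElement

namespace WQaux
open SemidirectProduct Multiplicative

lemma center_right (p : ℕ) (z : Wreath p) (hz : z ∈ Subgroup.center (Wreath p)) :
    z.right = 1 := by
  rw [Subgroup.mem_center_iff] at hz
  have hl := congrArg SemidirectProduct.left
    (hz (inl (ofAdd (fun i => if i = 0 then 1 else 0))))
  simp at hl
  rw [mul_comm] at hl
  have h2 := mul_left_cancel hl
  have h3 := congrArg (fun x : WreathBase p => x.toAdd (0 : ZMod p)) h2
  by_contra hne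
  have hr : z.right.toAdd ≠ 0 := fun h => hne (by rw [← ofAdd_toAdd z.right, h]; rfl)
  change (if (0 : ZMod p) = 0 then (1:ZMod 2) else 0)
    = (if (0 : ZMod p) + z.right.toAdd = 0 then (1:ZMod 2) else 0) at h3
  rw [if_pos rfl, if_neg (by simpa using hr)] at h3
  exact one_ne_zero h3

lemma center_left_const (p : ℕ) (z : Wreath p) (hz : z ∈ Subgroup.center (Wreath p)) :
    ∀ i j : ZMod p, z.left.toAdd i = z.left.toAdd j := by
  rw [Subgroup.mem_center_iff] at hz
  have key : ∀ m i : ZMod p, z.left.toAdd (i + m) = z.left.toAdd i := by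
    intro m i
    have hl := congrArg SemidirectProduct.left (hz (inr (ofAdd m)))
    simp at hl
    have h3 := congrArg (fun x : WreathBase p => x.toAdd i) hl
    change z.left.toAdd (i + m) = z.left.toAdd i at h3
    exact h3
  intro i j
  have := key (j - i) i
  rw [add_sub_cancel] at this
  exact this.symm

lemma const_mem_center (p : ℕ) (k : ZMod 2) :
    (inl (ofAdd (fun _ => k)) : Wreath p) ∈ Subgroup.center (Wreath p) := by
  rw [Subgroup.mem_center_iff]
  intro t
  refine SemidirectProduct.ext ?_ ?_
  · show t.left * wreathShift p t.right (ofAdd fun _ => k)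
      = (ofAdd fun _ => k) * wreathShift p 1 t.left
    rw [map_one, mul_comm]
    rfl
  · show t.right * 1 = 1 * t.right
    rw [mul_one, one_mul]

def wqProj (p : ℕ) : WreathQuot p →* Multiplicative (ZMod p) :=
  QuotientGroup.lift _ rightHom (fun z hz => center_right p z hz)

lemma wqProj_mk (p : ℕ) (z : Wreath p) :
    wqProj p (QuotientGroup.mk' _ z) = z.right := rfl

lemma wqProj_c (p : ℕ) : wqProj p (cElem p) = ofAdd 1 := rfl

lemma mem_Vsub_iff (p : ℕ) (x : WreathQuot p) : x ∈ Vsub p ↔ wqProj p x = 1 := by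
  constructor
  · rintro ⟨w, ⟨n, rfl⟩, rfl⟩
    exact rightHom_inl (φ := wreathShift p) n
  · intro h
    obtain ⟨z, rfl⟩ := QuotientGroup.mk'_surjective _ x
    rw [wqProj_mk] at h
    exact ⟨z, ⟨z.left, by ext <;> simp [h]⟩, rfl⟩

lemma comm_mem_Vsub (p : ℕ) (x y : WreathQuot p) : ⁅x, y⁆ ∈ Vsub p := by
  rw [mem_Vsub_iff, map_commutatorElement]
  exact commutatorElement_eq_one_iff_commute.mpr (Commute.all _ _)

lemma conj_base (p : ℕ) (f : ZMod p → ZMod 2) :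
    cElem p * (QuotientGroup.mk' _ (inl (ofAdd f)) : WreathQuot p) * (cElem p)⁻¹
      = QuotientGroup.mk' _ (inl (ofAdd (fun i => f (i + 1)))) := by
  rw [cElem, ← map_inv, ← map_mul, ← map_mul]
  congr 1
  rw [← map_inv]
  exact (inl_aut (ofAdd (1:ZMod p)) (ofAdd f)).symm

lemma fixed_point (p : ℕ) (hp : p.Prime) (hodd : Odd p) (x : WreathQuot p)
    (hx : x ∈ Vsub p) (hfix : cElem p * x * (cElem p)⁻¹ = x) : x = 1 := by
  haveI : NeZero p := ⟨hp.ne_zero⟩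
  obtain ⟨w, ⟨n, rfl⟩, rfl⟩ := hx
  set f : ZMod p → ZMod 2 := n.toAdd with hf
  have hn : n = ofAdd f := rfl
  rw [hn, conj_base] at hfix
  -- get the difference in the center
  have hc : (inl (ofAdd (fun i => f (i + 1))) : Wreath p)⁻¹ * inl (ofAdd f)
      ∈ Subgroup.center (Wreath p) := by
    rw [← QuotientGroup.eq]
    exact hfix
  rw [← map_inv, ← map_mul] at hc
  have hcon := center_left_const p _ hc
  simp only [left_inl] at hcon
  -- hcon : ∀ i j, ((ofAdd (fun i => f (i+1)))⁻¹ * ofAdd f).toAdd i = ...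
  have hcon' : ∀ i j : ZMod p, - f (i + 1) + f i = - f (j + 1) + f j := by
    intro i j; exact hcon i j
  set k : ZMod 2 := - f (0 + 1) + f 0 with hk
  have hstep : ∀ i : ZMod p, f (i + 1) = f i - k := by
    intro i
    have := (hcon' i 0).symm
    rw [← hk] at this
    -- this : k = - f (i+1) + f i
    have : f (i + 1) + k = f i := by rw [this]; abel
    rw [← this]; abel
  have hiter : ∀ m : ℕ, f ((m : ZMod p)) = f 0 - m • k := by
    intro m
    induction m with
    | zero => simp
    | succ m ih =>
      push_cast
      rw [hstep, ih, succ_nsmul]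
      abel
  have hpk : p • k = 0 := by
    have := hiter p
    rw [ZMod.natCast_self] at this
    have h0 : f 0 = f 0 - p • k := this
    exact sub_eq_self.mp h0.symm
  have hk0 : k = 0 := by
    obtain ⟨t, ht⟩ := hodd
    rw [ht, add_nsmul, mul_nsmul, one_nsmul] at hpk
    have h2k : (2 : ℕ) • k = 0 := by
      rw [two_nsmul]
      exact CharTwo.add_self_eq_zero k
    rw [h2k, smul_zero, zero_add] at hpk
    exact hpk
  have hconst : f = fun _ => f 0 := by
    funext i
    have h1 := hiter i.val
    rw [hk0, smul_zero, sub_zero] at h1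
    rw [← ZMod.natCast_rightInverse i]
    exact h1
  show (QuotientGroup.mk' (Subgroup.center (Wreath p))) (inl n) = 1
  rw [hn, hconst]
  exact (QuotientGroup.eq_one_iff _).mpr (const_mem_center p (f 0))

lemma Vsub_conj_mem (p : ℕ) (x : WreathQuot p) (hx : x ∈ Vsub p) :
    cElem p * x * (cElem p)⁻¹ ∈ Vsub p := by
  rw [mem_Vsub_iff] at hx ⊢
  rw [map_mul, map_mul, map_inv, hx, mul_one, mul_comm, inv_mul_cancel]

lemma D_inj (p : ℕ) (hp : p.Prime) (hodd : Odd p) (x y : WreathQuot p)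
    (hx : x ∈ Vsub p) (hy : y ∈ Vsub p)
    (h : ⁅cElem p, x⁆ = ⁅cElem p, y⁆) : x = y := by
  set c := cElem p
  rw [commutatorElement_def, commutatorElement_def] at h
  have h2 : c * (y⁻¹ * x) * c⁻¹ = y⁻¹ * x := by
    calc c * (y⁻¹ * x) * c⁻¹
        = (c * y * c⁻¹)⁻¹ * (c * x * c⁻¹ * x⁻¹) * x := by group
      _ = (c * y * c⁻¹)⁻¹ * (c * y * c⁻¹ * y⁻¹) * x := by rw [h]
      _ = y⁻¹ * x := by group
  have := fixed_point p hp hodd (y⁻¹ * x) (mul_mem (inv_mem hy) hx) h2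
  rw [inv_mul_eq_one] at this
  exact this.symm

end WQaux

/-- For an odd prime `p` and `G = (C₂ ≀ C_p)/Z = V ⋊ ⟨c⟩`: if
`v₁ c^{a₁}, …, v_n c^{a_n}` generate `G` (with `v_i ∈ V`), then some
`a_i ≢ 0 (mod p)`, each commutator `w_i = [c, v_i c^{a_i}]` lies in `V`,
and if moreover `c` itself is among the generators (say the first one), then
`{c, w₂, …, w_n}` also generates `G`. -/
theorem commutator_generators (p : ℕ) (hp : p.Prime) (hodd : Odd p)
    (n : ℕ) (g : Fin (n + 1) → WreathQuot p)
    (v : Fin (n + 1) → WreathQuot p) (a : Fin (n + 1) → ℕ)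
    (hv : ∀ i, v i ∈ Vsub p)
    (hgi : ∀ i, g i = v i * cElem p ^ a i)
    (hgen : Subgroup.closure (Set.range g) = ⊤) :
    (∃ i, (a i : ZMod p) ≠ 0) ∧
    (∀ i, ⁅cElem p, g i⁆ ∈ Vsub p) ∧
    (g 0 = cElem p →
      Subgroup.closure ({cElem p} ∪ Set.range fun i => ⁅cElem p, g i⁆) = ⊤) := by
  haveI : NeZero p := ⟨hp.ne_zero⟩
  haveI : Fact (1 < p) := ⟨hp.one_lt⟩
  have part2 : ∀ i, ⁅cElem p, g i⁆ ∈ Vsub p := fun i => WQaux.comm_mem_Vsub p _ _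
  refine ⟨?_, part2, ?_⟩
  · by_contra hcon
    push_neg at hcon
    have hker : ∀ i, g i ∈ (WQaux.wqProj p).ker := by
      intro i
      rw [MonoidHom.mem_ker, hgi i, map_mul, map_pow,
        (WQaux.mem_Vsub_iff p (v i)).mp (hv i), one_mul, WQaux.wqProj_c]
      have : (Multiplicative.ofAdd (1 : ZMod p)) ^ (a i)
          = Multiplicative.ofAdd ((a i : ℕ) • (1 : ZMod p)) := by
        exact (ofAdd_nsmul _ _).symm
      rw [this, nsmul_eq_mul, mul_one, hcon i]
      rfl
    have htop : (⊤ : Subgroup (WreathQuot p)) ≤ (WQaux.wqProj p).ker := by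
      rw [← hgen]
      exact (Subgroup.closure_le _).mpr (by rintro _ ⟨i, rfl⟩; exact hker i)
    have := htop (Subgroup.mem_top (cElem p))
    rw [MonoidHom.mem_ker, WQaux.wqProj_c] at this
    have h10 : (1 : ZMod p) = 0 := this
    exact one_ne_zero h10
  · intro _
    set c := cElem p with hc
    set H := Subgroup.closure ({c} ∪ Set.range fun i => ⁅c, g i⁆) with hH
    have hcH : c ∈ H := Subgroup.subset_closure (Or.inl rfl)
    have hwH : ∀ i, ⁅c, g i⁆ ∈ H := fun i =>
      Subgroup.subset_closure (Or.inr ⟨i, rfl⟩)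
    haveI : Finite (Wreath p) := by
      apply Finite.of_injective (fun z : Wreath p => (z.left, z.right))
      intro z w h
      refine SemidirectProduct.ext ?_ ?_
      · exact congrArg Prod.fst h
      · exact congrArg Prod.snd h
    haveI : Finite (WreathQuot p) := Quotient.finite _
    haveI : Finite ↥(Vsub p) := Subtype.finite
    set Df : ↥(Vsub p) → ↥(Vsub p) :=
      fun x => ⟨⁅c, (x : WreathQuot p)⁆, WQaux.comm_mem_Vsub p _ _⟩ with hDf
    have hinj : Function.Injective Df := by
      intro x y h
      exact Subtype.ext (WQaux.D_inj p hp hodd _ _ x.2 y.2 (congrArg Subtype.val h))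
    set e : Equiv.Perm ↥(Vsub p) := Equiv.ofBijective Df
      ((Finite.injective_iff_bijective).mp hinj) with he
    have he_apply : ∀ x, e x = Df x := fun _ => rfl
    set m := orderOf e with hm
    have hmpos : 0 < m := orderOf_pos e
    have hme : e ^ m = 1 := pow_orderOf_eq_one e
    have hiter : ∀ (k : ℕ) (x : ↥(Vsub p)), (x : WreathQuot p) ∈ H →
        (((e ^ k) x : ↥(Vsub p)) : WreathQuot p) ∈ H := by
      intro k
      induction k with
      | zero => intro x hx; simpa using hx
      | succ k ih =>
        intro x hx
        have h1 : (e ^ (k+1)) x = (e ^ k) (e x) := by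
          rw [pow_succ, Equiv.Perm.mul_apply]
        rw [h1]
        apply ih
        rw [he_apply]
        show ⁅c, (x : WreathQuot p)⁆ ∈ H
        rw [commutatorElement_def]
        exact mul_mem (mul_mem (mul_mem hcH hx) (inv_mem hcH)) (inv_mem hx)
    have hvH : ∀ i, v i ∈ H := by
      intro i
      set xi : ↥(Vsub p) := ⟨v i, hv i⟩ with hxi
      set wi : ↥(Vsub p) := ⟨⁅c, g i⁆, part2 i⟩ with hwi
      have hDxw : Df xi = wi := by
        apply Subtype.ext
        show ⁅c, v i⁆ = ⁅c, g i⁆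
        rw [hgi i, commutatorElement_def, commutatorElement_def]
        group
      have hkey : (e ^ (m - 1)) wi = xi := by
        have h1 : (e ^ (m - 1)) (e xi) = (e ^ m) xi := by
          rw [← Equiv.Perm.mul_apply, ← pow_succ, Nat.sub_add_cancel hmpos]
        rw [he_apply, hDxw] at h1
        rw [h1, hme, Equiv.Perm.one_apply]
      have := hiter (m - 1) wi (hwH i)
      rw [hkey] at this
      exact this
    have hgH : ∀ i, g i ∈ H := by
      intro i
      rw [hgi i]
      exact mul_mem (hvH i) (pow_mem hcH _)
    rw [eq_top_iff, ← hgen]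
    exact (Subgroup.closure_le _).mpr (by rintro _ ⟨i, rfl⟩; exact hgH i)
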